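/- arXiv:1710.03114 — 3 statements merged into one kernel-verified Lean document; each statement's English description precedes it below -/
import Mathlib

section
/- Let Ω be an open subset of ℂ, f a holomorphic function on Ω, and g(z) = z·f(z). Then T_n(g)(z) = z · f^{(n)}(z)/n! · (-z)^n, where T_n(g)(z) = ∑_{k=0}^{n} g^{(k)}(z)/k! (-z)^k. -/
/-- The `n`-th partial sum of the Taylor expansion of `f` with centre `z`, evaluated at `0`. -/
noncomputable def T (n : ℕ) (f : ℂ → ℂ) (z : ℂ) : ℂ :=
  ∑ k ∈ Finset.range (n + 1), iteratedDeriv k f z / (Nat.factorial k : ℂ) * (-z) ^ k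

theorem T_mul_id (Ω : Set ℂ) (hΩ : IsOpen Ω) (f : ℂ → ℂ) (hf : DifferentiableOn ℂ f Ω)
    (g : ℂ → ℂ) (hg : ∀ z, g z = z * f z) (n : ℕ) (z : ℂ) (hz : z ∈ Ω) :
    T n g z = z * (iteratedDeriv n f z / (Nat.factorial n : ℂ)) * (-z) ^ n := by
  have hA : ∀ k : ℕ, AnalyticOnNhd ℂ (iteratedDeriv k f) Ω := by
    intro k
    induction k with
    | zero => exact hf.analyticOnNhd hΩ
    | succ k ih => rw [iteratedDeriv_succ]; exact ih.deriv
  -- Leibniz formula for g = z * f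
  have key : ∀ k : ℕ, ∀ w ∈ Ω, iteratedDeriv k g w
      = w * iteratedDeriv k f w + (k : ℂ) * iteratedDeriv (k - 1) f w := by
    intro k
    induction k with
    | zero => intro w _; simp [hg w]
    | succ k ih =>
      intro w hw
      rw [iteratedDeriv_succ]
      have hev : iteratedDeriv k g =ᶠ[nhds w]
          (fun u => u * iteratedDeriv k f u + (k : ℂ) * iteratedDeriv (k - 1) f u) := by
        filter_upwards [hΩ.mem_nhds hw] with u hu using ih u hu
      rw [hev.deriv_eq]
      have hF : HasDerivAt (iteratedDeriv k f) (iteratedDeriv (k + 1) f w) w := by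
        have := ((hA k w hw).differentiableAt).hasDerivAt
        rwa [iteratedDeriv_succ]
      have hG : HasDerivAt (iteratedDeriv (k - 1) f) (iteratedDeriv k f w) w ∨ k = 0 := by
        cases k with
        | zero => exact Or.inr rfl
        | succ m =>
          left
          have := ((hA m w hw).differentiableAt).hasDerivAt
          simpa [iteratedDeriv_succ] using this
      have hmul : HasDerivAt (fun u => u * iteratedDeriv k f u)
          (iteratedDeriv k f w + w * iteratedDeriv (k + 1) f w) w := by
        exact ((hasDerivAt_id' w).mul hF).congr_deriv (by simp)
      rcases hG with hG | hk
      · have htot : HasDerivAt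
            (fun u => u * iteratedDeriv k f u + (k : ℂ) * iteratedDeriv (k - 1) f u)
            (iteratedDeriv k f w + w * iteratedDeriv (k + 1) f w
              + (k : ℂ) * iteratedDeriv k f w) w :=
          hmul.add (hG.const_mul (k : ℂ))
        rw [htot.deriv]
        push_cast
        ring
      · subst hk
        have htot : HasDerivAt
            (fun u => u * iteratedDeriv 0 f u + (0 : ℂ) * iteratedDeriv (0 - 1) f u)
            (iteratedDeriv 0 f w + w * iteratedDeriv 1 f w) w := by
          simpa using hmul
        simp only [Nat.cast_zero, zero_mul] at htot ⊢
        rw [htot.deriv]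
        simp
        ring
  -- main induction
  induction n with
  | zero => simp [T, hg z]
  | succ n ih =>
    rw [T, Finset.sum_range_succ, ← T, ih]
    rw [key (n + 1) z hz]
    have h1 : ((n : ℂ) + 1) ≠ 0 := Nat.cast_add_one_ne_zero n
    have hfac' : ((n).factorial : ℂ) ≠ 0 := by
      exact_mod_cast Nat.cast_ne_zero.mpr (n).factorial_ne_zero
    rw [Nat.factorial_succ]
    push_cast
    field_simp
    ring
end

section
/- Let g be holomorphic on a neighbourhood of z₀ ∈ ℂ whose Taylor series at z₀ has radius of convergence R with 0 < R < ∞, and let ρ ≥ 1. Then limsup_{n→∞} ( max_{|z−z₀| ≤ ρR} |S_n(g,z₀)(z)| )^{1/n} = ρ, where S_n(g,z₀)(z) = ∑_{k=0}^{n} g^{(k)}(z₀)/k! (z−z₀)^k. -/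
open Filter Metric
open scoped Topology

/-- The `n`-th partial sum of the Taylor series of `g` centred at `z₀`, evaluated at `z`. -/
noncomputable def S (g : ℂ → ℂ) (z₀ : ℂ) (n : ℕ) (z : ℂ) : ℂ :=
  ∑ k ∈ Finset.range (n + 1), iteratedDeriv k g z₀ / (Nat.factorial k : ℂ) * (z - z₀) ^ k

/-- Cauchy-type estimate for the top coefficient of a polynomial, proved by averaging over
roots of unity. -/
lemma coeff_le_sup (c : ℕ → ℂ) (z₀ : ℂ) (n : ℕ) {r M : ℝ} (hr : 0 < r)
    (h : ∀ z ∈ closedBall z₀ r, ‖∑ k ∈ Finset.range (n + 1), c k * (z - z₀) ^ k‖ ≤ M) :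
    ‖c n‖ * r ^ n ≤ M := by
  set N := n + 1 with hNdef
  set ω : ℂ := Complex.exp (2 * Real.pi * Complex.I / N) with hωdef
  have hprim : IsPrimitiveRoot ω N := Complex.isPrimitiveRoot_exp N (Nat.succ_ne_zero n)
  have hω1 : ω ^ N = 1 := hprim.pow_eq_one
  have hnormω : ‖ω‖ = 1 := Complex.norm_eq_one_of_pow_eq_one hω1 (Nat.succ_ne_zero n)
  have hnormωj : ∀ j : ℕ, ‖ω ^ j‖ = 1 := fun j => by rw [norm_pow, hnormω, one_pow]
  have hzmem : ∀ j : ℕ, z₀ + (r : ℂ) * ω ^ j ∈ closedBall z₀ r := by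
    intro j
    simp only [mem_closedBall, dist_eq_norm, add_sub_cancel_left, norm_mul, hnormωj,
      Complex.norm_real, mul_one]
    rw [Real.norm_eq_abs, abs_of_pos hr]
  -- the key algebraic identity
  have key : ∑ j ∈ Finset.range N,
      ω ^ j * (∑ k ∈ Finset.range N, c k * ((z₀ + (r : ℂ) * ω ^ j) - z₀) ^ k)
      = (N : ℂ) * (c n * (r : ℂ) ^ n) := by
    have hterm : ∀ j k : ℕ, ω ^ j * (c k * ((z₀ + (r : ℂ) * ω ^ j) - z₀) ^ k)
        = c k * (r : ℂ) ^ k * (ω ^ (k + 1)) ^ j := by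
      intro j k
      have h1 : (z₀ + (r : ℂ) * ω ^ j) - z₀ = (r : ℂ) * ω ^ j := by ring
      have h2 : (ω ^ (k + 1)) ^ j = (ω ^ j) ^ k * ω ^ j := by
        rw [pow_succ, mul_pow, pow_right_comm]
      rw [h1, h2, mul_pow]
      ring
    calc ∑ j ∈ Finset.range N,
        ω ^ j * (∑ k ∈ Finset.range N, c k * ((z₀ + (r : ℂ) * ω ^ j) - z₀) ^ k)
        = ∑ j ∈ Finset.range N, ∑ k ∈ Finset.range N, c k * (r : ℂ) ^ k * (ω ^ (k + 1)) ^ j := by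
          refine Finset.sum_congr rfl fun j _ => ?_
          rw [Finset.mul_sum]
          exact Finset.sum_congr rfl fun k _ => hterm j k
      _ = ∑ k ∈ Finset.range N, (c k * (r : ℂ) ^ k) * ∑ j ∈ Finset.range N, (ω ^ (k + 1)) ^ j := by
          rw [Finset.sum_comm]
          exact Finset.sum_congr rfl fun k _ => by rw [Finset.mul_sum]
      _ = ∑ k ∈ Finset.range N, (c k * (r : ℂ) ^ k) * (if k = n then (N : ℂ) else 0) := by
          refine Finset.sum_congr rfl fun k hk => ?_
          congr 1
          rcases eq_or_ne k n with rfl | hkn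
          · rw [if_pos rfl, show k + 1 = N from hNdef.symm, hω1]; simp
          · rw [if_neg hkn]
            have hklt : k + 1 < N := by
              have := Finset.mem_range.mp hk
              omega
            have hne : ω ^ (k + 1) ≠ 1 :=
              hprim.pow_ne_one_of_pos_of_lt (Nat.succ_ne_zero k) hklt
            rw [geom_sum_eq hne]
            have hpow : (ω ^ (k + 1)) ^ N = 1 := by
              rw [pow_right_comm, hω1, one_pow]
            rw [hpow, sub_self, zero_div]
      _ = (N : ℂ) * (c n * (r : ℂ) ^ n) := by
          rw [Finset.sum_eq_single n (fun k _ hkn => by rw [if_neg hkn, mul_zero])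
            (fun hn => absurd (Finset.self_mem_range_succ n) hn)]
          rw [if_pos rfl]; ring
  -- norm estimate
  have hub : ‖∑ j ∈ Finset.range N,
      ω ^ j * (∑ k ∈ Finset.range N, c k * ((z₀ + (r : ℂ) * ω ^ j) - z₀) ^ k)‖ ≤ N * M := by
    calc ‖∑ j ∈ Finset.range N,
        ω ^ j * (∑ k ∈ Finset.range N, c k * ((z₀ + (r : ℂ) * ω ^ j) - z₀) ^ k)‖
        ≤ ∑ j ∈ Finset.range N,
          ‖ω ^ j * (∑ k ∈ Finset.range N, c k * ((z₀ + (r : ℂ) * ω ^ j) - z₀) ^ k)‖ :=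
          norm_sum_le _ _
      _ ≤ ∑ _j ∈ Finset.range N, M := by
          refine Finset.sum_le_sum fun j _ => ?_
          rw [norm_mul, hnormωj, one_mul]
          exact h _ (hzmem j)
      _ = N * M := by simp [mul_comm]
  rw [key] at hub
  have hN0 : (0:ℝ) < (N : ℝ) := by positivity
  have hnorm : ‖(N : ℂ) * (c n * (r : ℂ) ^ n)‖ = (N : ℝ) * (‖c n‖ * r ^ n) := by
    rw [norm_mul, norm_mul, norm_pow, Complex.norm_natCast, Complex.norm_real,
      Real.norm_eq_abs, abs_of_pos hr]
  rw [hnorm] at hub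
  exact le_of_mul_le_mul_left hub hN0

theorem limsup_sup_partial_sums (g : ℂ → ℂ) (z₀ : ℂ) (ε : ℝ) (hε : 0 < ε)
    (hg : DifferentiableOn ℂ g (ball z₀ ε)) (R : ℝ) (hR0 : 0 < R)
    (hradius : Filter.limsup
      (fun k : ℕ => ‖iteratedDeriv k g z₀ / (Nat.factorial k : ℂ)‖ ^ (1 / (k : ℝ)))
      Filter.atTop = 1 / R)
    (ρ : ℝ) (hρ : 1 ≤ ρ) :
    Filter.limsup
      (fun n : ℕ =>
        (sSup ((fun z => ‖S g z₀ n z‖) '' closedBall z₀ (ρ * R))) ^ (1 / (n : ℝ)))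
      Filter.atTop = ρ := by
  have hρ0 : (0:ℝ) < ρ := lt_of_lt_of_le one_pos hρ
  set a : ℕ → ℂ := fun k => iteratedDeriv k g z₀ / (Nat.factorial k : ℂ) with ha
  set r : ℝ := ρ * R with hrdef
  have hr : 0 < r := mul_pos hρ0 hR0
  set v : ℕ → ℝ := fun k => ‖a k‖ ^ (1 / (k : ℝ)) with hv
  set M : ℕ → ℝ := fun n => sSup ((fun z => ‖S g z₀ n z‖) '' closedBall z₀ r) with hM
  set u : ℕ → ℝ := fun n => M n ^ (1 / (n : ℝ)) with hu
  have hScont : ∀ n, Continuous fun z => ‖S g z₀ n z‖ := by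
    intro n
    unfold S
    fun_prop
  have hbdd : ∀ n, BddAbove ((fun z => ‖S g z₀ n z‖) '' closedBall z₀ r) := fun n =>
    (isCompact_closedBall z₀ r).bddAbove_image (hScont n).continuousOn
  have hne : ∀ n, ((fun z => ‖S g z₀ n z‖) '' closedBall z₀ r).Nonempty := fun n =>
    ⟨_, Set.mem_image_of_mem _ (mem_closedBall_self hr.le)⟩
  have hle : ∀ n, ∀ z ∈ closedBall z₀ r, ‖S g z₀ n z‖ ≤ M n := fun n z hz =>
    le_csSup (hbdd n) (Set.mem_image_of_mem _ hz)
  have hM0 : ∀ n, 0 ≤ M n := fun n =>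
    le_trans (norm_nonneg _) (hle n z₀ (mem_closedBall_self hr.le))
  have hu0 : ∀ n, 0 ≤ u n := fun n => Real.rpow_nonneg (hM0 n) _
  have hv0 : ∀ k, 0 ≤ v k := fun k => Real.rpow_nonneg (norm_nonneg _) _
  -- coefficient lower bound for M
  have hcoeff : ∀ n, ‖a n‖ * r ^ n ≤ M n := by
    intro n
    refine coeff_le_sup a z₀ n hr fun z hz => ?_
    have := hle n z hz
    unfold S at this
    exact this
  -- coefficients are bounded: Taylor series converges at z₀ + ε/2
  have hz2 : z₀ + ((ε / 2 : ℝ) : ℂ) ∈ ball z₀ ε := by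
    simp only [mem_ball, dist_eq_norm, add_sub_cancel_left, Complex.norm_real,
      Real.norm_eq_abs, abs_of_pos (half_pos hε)]
    linarith
  have hsum := Complex.hasSum_taylorSeries_on_ball hg hz2
  have hterm : ∀ k : ℕ,
      ‖((Nat.factorial k : ℂ))⁻¹ • ((z₀ + ((ε / 2 : ℝ) : ℂ)) - z₀) ^ k •
        iteratedDeriv k g z₀‖ = ‖a k‖ * (ε / 2) ^ k := by
    intro k
    have hfac : (0:ℝ) < (Nat.factorial k : ℝ) := by positivity
    simp only [add_sub_cancel_left, norm_smul, norm_pow, Complex.norm_real, Real.norm_eq_abs,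
      abs_of_pos (half_pos hε), norm_inv, Complex.norm_natCast, ha, norm_div,
      abs_div, abs_of_pos hε, abs_two]
    ring
  have htend : Tendsto (fun k => ‖a k‖ * (ε / 2) ^ k) atTop (𝓝 0) := by
    have h1 := (hsum.summable.tendsto_atTop_zero).norm
    rw [norm_zero] at h1
    simpa only [hterm] using h1
  obtain ⟨C₀, hC₀⟩ := htend.bddAbove_range
  set C : ℝ := max C₀ 1 with hC
  have hC1 : (1:ℝ) ≤ C := le_max_right _ _
  have hC0 : (0:ℝ) < C := lt_of_lt_of_le one_pos hC1
  have haC : ∀ k, ‖a k‖ * (ε / 2) ^ k ≤ C :=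
    fun k => le_trans (hC₀ (Set.mem_range_self k)) (le_max_left _ _)
  have hvbdd : ∀ k : ℕ, 1 ≤ k → v k ≤ C * (2 / ε) := by
    intro k hk
    have hk0 : (k:ℕ) ≠ 0 := by omega
    have hhalf : (0:ℝ) < (ε / 2) ^ k := by positivity
    have h1 : ‖a k‖ ≤ C * (2 / ε) ^ k := by
      have hmul : (ε / 2) ^ k * (2 / ε) ^ k = 1 := by
        rw [← mul_pow, div_mul_div_comm, show ε * 2 / (2 * ε) = 1 by rw [mul_comm]; exact div_self (by positivity)]
        exact one_pow k
      have h2 := mul_le_mul_of_nonneg_right (haC k)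
        (pow_nonneg (by positivity : (0:ℝ) ≤ 2 / ε) k)
      rwa [mul_assoc, hmul, mul_one] at h2
    have h3 : v k ≤ (C * (2 / ε) ^ k) ^ (1 / (k : ℝ)) :=
      Real.rpow_le_rpow (norm_nonneg _) h1 (by positivity)
    calc v k ≤ (C * (2 / ε) ^ k) ^ (1 / (k : ℝ)) := h3
      _ = C ^ (1 / (k:ℝ)) * (2 / ε) := by
          rw [Real.mul_rpow hC0.le (by positivity), one_div,
            Real.pow_rpow_inv_natCast (by positivity) hk0]
      _ ≤ C * (2 / ε) := by
          have : C ^ (1 / (k:ℝ)) ≤ C ^ (1:ℝ) := by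
            apply Real.rpow_le_rpow_of_exponent_le hC1
            rw [div_le_one (by exact_mod_cast Nat.pos_of_ne_zero hk0)]
            exact_mod_cast Nat.one_le_cast.mpr hk
          rw [Real.rpow_one] at this
          exact mul_le_mul_of_nonneg_right this (by positivity)
  have hvBdd : IsBoundedUnder (· ≤ ·) atTop v :=
    isBoundedUnder_of_eventually_le
      ((eventually_ge_atTop 1).mono fun k hk => hvbdd k hk)
  -- upper bound: eventual bound by any c > ρ
  have hub : ∀ c, ρ < c → ∀ᶠ n in atTop, u n ≤ c := by
    intro c hc
    have hc0 : 0 < c := lt_trans hρ0 hc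
    set s : ℝ := Real.sqrt (c * ρ) with hs
    have hcρ : 1 < c * ρ := by nlinarith
    have hs2 : s ^ 2 = c * ρ := Real.sq_sqrt (by positivity)
    have hs0 : 0 ≤ s := Real.sqrt_nonneg _
    have hs1 : 1 < s := by nlinarith
    have hsc : s < c := by nlinarith
    have hρs : ρ < s := by nlinarith
    have hlim : limsup v atTop < s / r := by
      rw [hradius, div_lt_div_iff₀ hR0 hr, hrdef]
      nlinarith
    have hev := eventually_lt_of_limsup_lt hlim hvBdd
    obtain ⟨K, hK⟩ := eventually_atTop.mp (hev.and (eventually_ge_atTop 1))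
    have hak : ∀ k, K ≤ k → ‖a k‖ * r ^ k ≤ s ^ k := by
      intro k hk
      obtain ⟨hvk, hk1⟩ := hK k hk
      have hk0 : k ≠ 0 := by omega
      have h2 : ‖a k‖ ≤ (s / r) ^ k := by
        have h3 : ‖a k‖ = (v k) ^ k := by
          simp only [hv, one_div]
          rw [Real.rpow_inv_natCast_pow (norm_nonneg _) hk0]
        rw [h3]
        exact pow_le_pow_left₀ (hv0 k) hvk.le k
      calc ‖a k‖ * r ^ k ≤ (s / r) ^ k * r ^ k :=
            mul_le_mul_of_nonneg_right h2 (by positivity)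
        _ = s ^ k := by rw [div_pow]; field_simp
    set D : ℝ := ∑ k ∈ Finset.range K, ‖a k‖ * r ^ k with hD
    have hD0 : 0 ≤ D := Finset.sum_nonneg fun k _ => by positivity
    set E : ℝ := D + s / (s - 1) with hE
    have hE0 : 0 < E :=
      hE ▸ add_pos_of_nonneg_of_pos hD0 (div_pos (by linarith) (by linarith))
    have hMle : ∀ n, K ≤ n → M n ≤ E * s ^ n := by
      intro n hn
      have hcs : M n ≤ ∑ k ∈ Finset.range (n + 1), ‖a k‖ * r ^ k := by
        refine csSup_le (hne n) ?_
        rintro x ⟨z, hz, rfl⟩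
        have hzr : ‖z - z₀‖ ≤ r := by rwa [mem_closedBall, dist_eq_norm] at hz
        calc ‖S g z₀ n z‖ ≤ ∑ k ∈ Finset.range (n + 1), ‖a k * (z - z₀) ^ k‖ := by
              unfold S; exact norm_sum_le _ _
          _ ≤ ∑ k ∈ Finset.range (n + 1), ‖a k‖ * r ^ k := by
              refine Finset.sum_le_sum fun k _ => ?_
              rw [norm_mul, norm_pow]
              exact mul_le_mul_of_nonneg_left (pow_le_pow_left₀ (norm_nonneg _) hzr k)
                (norm_nonneg _)
      have hsplit : ∑ k ∈ Finset.range (n + 1), ‖a k‖ * r ^ k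
          = D + ∑ k ∈ Finset.Ico K (n + 1), ‖a k‖ * r ^ k := by
        rw [hD, Finset.range_eq_Ico,
          ← Finset.sum_Ico_consecutive _ (Nat.zero_le K) (by omega : K ≤ n + 1), Finset.range_eq_Ico]
      have htail : ∑ k ∈ Finset.Ico K (n + 1), ‖a k‖ * r ^ k ≤ s / (s - 1) * s ^ n := by
        calc ∑ k ∈ Finset.Ico K (n + 1), ‖a k‖ * r ^ k
            ≤ ∑ k ∈ Finset.Ico K (n + 1), s ^ k :=
              Finset.sum_le_sum fun k hk => hak k (Finset.mem_Ico.mp hk).1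
          _ ≤ ∑ k ∈ Finset.range (n + 1), s ^ k := by
              rw [Finset.range_eq_Ico]
              exact Finset.sum_le_sum_of_subset_of_nonneg
                (Finset.Ico_subset_Ico (Nat.zero_le K) le_rfl)
                (fun k _ _ => by positivity)
          _ = (s ^ (n + 1) - 1) / (s - 1) := geom_sum_eq (by linarith) (n + 1)
          _ ≤ s ^ (n + 1) / (s - 1) := by
              apply div_le_div_of_nonneg_right ?_ (by linarith)
              linarith
          _ = s / (s - 1) * s ^ n := by rw [pow_succ]; ring
      have hDs : D ≤ D * s ^ n := le_mul_of_one_le_right hD0 (one_le_pow₀ hs1.le)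
      calc M n ≤ D + ∑ k ∈ Finset.Ico K (n + 1), ‖a k‖ * r ^ k := by
            rw [← hsplit]; exact hcs
        _ ≤ D * s ^ n + s / (s - 1) * s ^ n := add_le_add hDs htail
        _ = E * s ^ n := by rw [hE]; ring
    have htend1 : Tendsto (fun n : ℕ => E ^ (1 / (n : ℝ)) * s) atTop (𝓝 s) := by
      have h1 : Tendsto (fun n : ℕ => Real.log E / n) atTop (𝓝 0) :=
        tendsto_const_div_atTop_nhds_zero_nat _
      have h2 : Tendsto (fun n : ℕ => E ^ (1 / (n : ℝ))) atTop (𝓝 1) := by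
        have heq : ∀ n : ℕ, E ^ (1 / (n:ℝ)) = Real.exp (Real.log E * (1 / (n:ℝ))) :=
          fun n => Real.rpow_def_of_pos hE0 _
        simp_rw [heq, mul_one_div]
        have := (Real.continuous_exp.tendsto 0).comp h1
        simpa [Function.comp_def] using this
      have := h2.mul_const s
      rwa [one_mul] at this
    have hevc : ∀ᶠ n : ℕ in atTop, E ^ (1 / (n : ℝ)) * s < c :=
      htend1.eventually_lt_const hsc
    filter_upwards [hevc, eventually_ge_atTop (max K 1)] with n hn1 hn2
    have hnK : K ≤ n := le_trans (le_max_left _ _) hn2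
    have hn0 : n ≠ 0 := by
      have := le_trans (le_max_right _ _) hn2; omega
    calc u n ≤ (E * s ^ n) ^ (1 / (n:ℝ)) :=
          Real.rpow_le_rpow (hM0 n) (hMle n hnK) (by positivity)
      _ = E ^ (1 / (n:ℝ)) * s := by
          rw [Real.mul_rpow hE0.le (by positivity), one_div,
            Real.pow_rpow_inv_natCast hs0 hn0]
      _ ≤ c := hn1.le
  -- limsup u ≤ ρ
  have huCo : IsCoboundedUnder (· ≤ ·) atTop u :=
    isCoboundedUnder_le_of_le atTop fun n => hu0 n
  have huBdd : IsBoundedUnder (· ≤ ·) atTop u :=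
    isBoundedUnder_of_eventually_le (hub (ρ + 1) (by linarith))
  have hle1 : limsup u atTop ≤ ρ :=
    le_of_forall_gt_imp_ge_of_dense fun c hc => limsup_le_of_le huCo (hub c hc)
  -- limsup u ≥ ρ
  have hvCo : IsCoboundedUnder (· ≤ ·) atTop v :=
    isCoboundedUnder_le_of_le atTop fun k => hv0 k
  have hrvBdd : IsBoundedUnder (· ≤ ·) atTop fun k => r * v k :=
    isBoundedUnder_of_eventually_le
      ((eventually_ge_atTop 1).mono fun k hk =>
        mul_le_mul_of_nonneg_left (hvbdd k hk) hr.le)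
  have hrvCo : IsCoboundedUnder (· ≤ ·) atTop fun k => r * v k :=
    isCoboundedUnder_le_of_le atTop fun k => mul_nonneg hr.le (hv0 k)
  have hiso := OrderIso.limsup_apply (f := atTop) (u := v)
    (OrderIso.mulLeft₀ r hr) hvBdd hvCo (by simpa using hrvBdd) (by simpa using hrvCo)
  simp only [OrderIso.mulLeft₀_apply] at hiso
  have hρeq : r * limsup v atTop = ρ := by
    rw [hradius, hrdef]
    field_simp
  have hlow : ∀ᶠ k in atTop, r * v k ≤ u k := by
    filter_upwards [eventually_ge_atTop 1] with k hk
    have hk0 : k ≠ 0 := by omega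
    have h1 : (‖a k‖ * r ^ k) ^ (1 / (k:ℝ)) ≤ u k :=
      Real.rpow_le_rpow (by positivity) (hcoeff k) (by positivity)
    calc r * v k = (‖a k‖ * r ^ k) ^ (1 / (k:ℝ)) := by
          rw [Real.mul_rpow (norm_nonneg _) (by positivity), one_div,
            Real.pow_rpow_inv_natCast hr.le hk0]
          simp only [hv, one_div]
          ring
      _ ≤ u k := h1
  have hge1 : ρ ≤ limsup u atTop := by
    calc ρ = r * limsup v atTop := hρeq.symm
      _ = limsup (fun k => r * v k) atTop := hiso
      _ ≤ limsup u atTop := limsup_le_limsup hlow hrvCo huBdd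
  exact le_antisymm hle1 hge1
end

section
/- Let z₀ ∈ ℂ, r > 0 with 0 ∉ D(z₀,r), and let log be a branch of the logarithm on D(z₀,r). Then the functions of the form z ↦ P(log z), where P ranges over polynomials with coefficients in ℚ + iℚ, form a dense subset of H(D(z₀,r)) in the topology of uniform convergence on compact subsets. -/
open Filter Metric

/-- The collection of compact subsets of the ball `D(z₀, r)`. -/
def Compacts (z₀ : ℂ) (r : ℝ) : Set (Set ℂ) := {K | IsCompact K ∧ K ⊆ ball z₀ r}

/-- The space `H(D(z₀,r))` of holomorphic functions on the disc, carrying the topology of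
uniform convergence on compact subsets of the disc. -/
def Hol (z₀ : ℂ) (r : ℝ) : Type :=
  {f : UniformOnFun ℂ ℂ (Compacts z₀ r) //
    DifferentiableOn ℂ (UniformOnFun.toFun (Compacts z₀ r) f) (ball z₀ r)}

noncomputable instance (z₀ : ℂ) (r : ℝ) : TopologicalSpace (Hol z₀ r) :=
  instTopologicalSpaceSubtype

/-- A polynomial has coefficients in `ℚ + iℚ`. -/
def RatCoeff (P : Polynomial ℂ) : Prop :=
  ∀ n, ∃ a b : ℚ, P.coeff n = (a : ℂ) + (b : ℂ) * Complex.I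

/-! ### Auxiliary lemmas -/

open scoped ENNReal NNReal Topology

lemma exists_ratc_close (a : ℂ) {δ : ℝ} (hδ : 0 < δ) :
    ∃ x y : ℚ, ‖((x : ℂ) + (y : ℂ) * Complex.I) - a‖ ≤ δ := by
  obtain ⟨x, hx1, hx2⟩ := exists_rat_btwn (show a.re < a.re + δ / 2 by linarith)
  obtain ⟨y, hy1, hy2⟩ := exists_rat_btwn (show a.im < a.im + δ / 2 by linarith)
  refine ⟨x, y, ?_⟩
  set w : ℂ := ((x : ℂ) + (y : ℂ) * Complex.I) - a with hw
  have hre : w.re = (x : ℝ) - a.re := by simp [hw]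
  have him : w.im = (y : ℝ) - a.im := by simp [hw]
  have habs : ‖w‖ ≤ |w.re| + |w.im| := Complex.norm_le_abs_re_add_abs_im w
  have h1 : |w.re| ≤ δ / 2 := by rw [hre, abs_le]; constructor <;> linarith
  have h2 : |w.im| ≤ δ / 2 := by rw [him, abs_le]; constructor <;> linarith
  calc ‖w‖ = ‖w‖ := rfl
    _ ≤ |w.re| + |w.im| := habs
    _ ≤ δ / 2 + δ / 2 := add_le_add h1 h2
    _ = δ := by ring

lemma ratCoeff_add {P Q : Polynomial ℂ} (hP : RatCoeff P) (hQ : RatCoeff Q) :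
    RatCoeff (P + Q) := by
  intro n
  obtain ⟨a, b, ha⟩ := hP n
  obtain ⟨c, d, hc⟩ := hQ n
  exact ⟨a + c, b + d, by rw [Polynomial.coeff_add, ha, hc]; push_cast; ring⟩

lemma ratCoeff_monomial (n : ℕ) (x y : ℚ) :
    RatCoeff (Polynomial.monomial n ((x : ℂ) + (y : ℂ) * Complex.I)) := by
  intro k
  by_cases h : n = k
  · exact ⟨x, y, by simp [Polynomial.coeff_monomial, h]⟩
  · exact ⟨0, 0, by simp [Polynomial.coeff_monomial, h]⟩

lemma exists_ratPoly_approx (P : Polynomial ℂ) (M : ℝ) :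
    ∀ ε : ℝ, 0 < ε → ∃ Q : Polynomial ℂ, RatCoeff Q ∧
      ∀ w : ℂ, ‖w‖ ≤ M → ‖Q.eval w - P.eval w‖ ≤ ε := by
  induction P using Polynomial.induction_on' with
  | add p q hp hq =>
    intro ε hε
    obtain ⟨Qp, hQp, hp2⟩ := hp (ε / 2) (by linarith)
    obtain ⟨Qq, hQq, hq2⟩ := hq (ε / 2) (by linarith)
    refine ⟨Qp + Qq, ratCoeff_add hQp hQq, fun w hw => ?_⟩
    simp only [Polynomial.eval_add]
    have e : Qp.eval w + Qq.eval w - (p.eval w + q.eval w)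
        = (Qp.eval w - p.eval w) + (Qq.eval w - q.eval w) := by ring
    rw [e]
    calc ‖(Qp.eval w - p.eval w) + (Qq.eval w - q.eval w)‖
        ≤ ‖Qp.eval w - p.eval w‖ + ‖Qq.eval w - q.eval w‖ := norm_add_le _ _
      _ ≤ ε / 2 + ε / 2 := add_le_add (hp2 w hw) (hq2 w hw)
      _ = ε := by ring
  | monomial n a =>
    intro ε hε
    set B := max M 1 with hB
    have hB1 : (1 : ℝ) ≤ B := le_max_right _ _
    have hBn : (0 : ℝ) < B ^ n := pow_pos (by linarith) n
    obtain ⟨x, y, hxy⟩ := exists_ratc_close a (div_pos hε hBn)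
    refine ⟨Polynomial.monomial n ((x : ℂ) + (y : ℂ) * Complex.I),
      ratCoeff_monomial n x y, fun w hw => ?_⟩
    rw [Polynomial.eval_monomial, Polynomial.eval_monomial]
    have hwB : ‖w‖ ≤ B := le_trans hw (le_max_left _ _)
    have e : ((x : ℂ) + (y : ℂ) * Complex.I) * w ^ n - a * w ^ n
        = (((x : ℂ) + (y : ℂ) * Complex.I) - a) * w ^ n := by ring
    rw [e, norm_mul, norm_pow]
    calc ‖((x : ℂ) + (y : ℂ) * Complex.I) - a‖ * ‖w‖ ^ n
        ≤ (ε / B ^ n) * B ^ n := by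
          apply mul_le_mul hxy (pow_le_pow_left₀ (norm_nonneg w) hwB n)
            (by positivity) (by positivity)
      _ = ε := div_mul_cancel₀ ε (ne_of_gt hBn)

lemma partialSum_eq (p : FormalMultilinearSeries ℂ ℂ ℂ) (n : ℕ) (y : ℂ) :
    p.partialSum n y = ∑ k ∈ Finset.range n, y ^ k * p.coeff k := by
  simp [FormalMultilinearSeries.partialSum,
    FormalMultilinearSeries.apply_eq_pow_smul_coeff, smul_eq_mul]

lemma main_approx (z₀ : ℂ) (r : ℝ) (hr : 0 < r) (L : ℂ → ℂ)
    (hexp : ∀ z ∈ ball z₀ r, Complex.exp (L z) = z)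
    (hLc : ContinuousOn L (ball z₀ r))
    (f : ℂ → ℂ) (hf : DifferentiableOn ℂ f (ball z₀ r))
    (ρ : ℝ) (hρ0 : 0 ≤ ρ) (hρ : ρ < r) (ε : ℝ) (hε : 0 < ε) :
    ∃ Q : Polynomial ℂ, RatCoeff Q ∧
      ∀ z ∈ closedBall z₀ ρ, ‖Q.eval (L z) - f z‖ ≤ ε := by
  set r₁ : ℝ := (ρ + r) / 2 with hr₁def
  set r₂ : ℝ := (ρ + r₁) / 2 with hr₂def
  have hρr₁ : ρ < r₁ := by rw [hr₁def]; linarith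
  have hr₁r : r₁ < r := by rw [hr₁def]; linarith
  have hρr₂ : ρ < r₂ := by rw [hr₂def]; linarith
  have hr₂r₁ : r₂ < r₁ := by rw [hr₂def]; linarith
  have h0r₁ : 0 < r₁ := lt_of_le_of_lt hρ0 hρr₁
  have h0r₂ : 0 < r₂ := lt_of_le_of_lt hρ0 hρr₂
  -- power series of `f` at `z₀`
  have hdf : DifferentiableOn ℂ f (closedBall z₀ (r₁.toNNReal : ℝ)) := by
    apply hf.mono
    rw [Real.coe_toNNReal _ h0r₁.le]
    exact closedBall_subset_ball hr₁r
  have hps := hdf.hasFPowerSeriesOnBall (Real.toNNReal_pos.mpr h0r₁)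
  set p := cauchyPowerSeries f z₀ r₁.toNNReal with hpdef
  have hlt : ((r₂.toNNReal : ℝ≥0∞)) < (r₁.toNNReal : ℝ≥0∞) := by
    rw [ENNReal.coe_lt_coe]
    exact (Real.toNNReal_lt_toNNReal_iff h0r₁).mpr hr₂r₁
  have htu := hps.tendstoUniformlyOn' hlt
  rw [Metric.tendstoUniformlyOn_iff] at htu
  obtain ⟨n, hn⟩ := (htu (ε / 3) (by linarith)).exists
  -- an entire function that agrees with the partial sum along `exp`
  set h : ℂ → ℂ := fun w => ∑ k ∈ Finset.range n, (Complex.exp w - z₀) ^ k * p.coeff k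
    with hhdef
  have hh : Differentiable ℂ h := by
    apply Differentiable.fun_sum
    intro k _
    exact ((Complex.differentiable_exp.sub_const z₀).pow k).mul_const _
  -- bound on `‖L z‖` over the compact set
  have hK : closedBall z₀ ρ ⊆ ball z₀ r := closedBall_subset_ball hρ
  obtain ⟨C, hC⟩ := (isCompact_closedBall z₀ ρ).exists_bound_of_continuousOn (hLc.mono hK)
  set M : ℝ := max C 0 with hMdef
  have hM0 : (0 : ℝ) ≤ M := le_max_right _ _
  have hLM : ∀ z ∈ closedBall z₀ ρ, ‖L z‖ ≤ M :=
    fun z hz => (hC z hz).trans (le_max_left _ _)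
  -- power series of `h` at `0`
  have hdh : DifferentiableOn ℂ h (closedBall (0 : ℂ) ((M + 1).toNNReal : ℝ)) :=
    hh.differentiableOn
  have hqs := hdh.hasFPowerSeriesOnBall (Real.toNNReal_pos.mpr (by linarith))
  set q := cauchyPowerSeries h 0 (M + 1).toNNReal with hqdef
  have hlt2 : (((M + 2⁻¹).toNNReal : ℝ≥0∞)) < ((M + 1).toNNReal : ℝ≥0∞) := by
    rw [ENNReal.coe_lt_coe]
    refine (Real.toNNReal_lt_toNNReal_iff (by linarith)).mpr (by norm_num)
  have htu2 := hqs.tendstoUniformlyOn' hlt2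
  rw [Metric.tendstoUniformlyOn_iff] at htu2
  obtain ⟨m, hm⟩ := (htu2 (ε / 3) (by linarith)).exists
  -- the approximating polynomial
  set P : Polynomial ℂ := ∑ k ∈ Finset.range m, Polynomial.C (q.coeff k) * Polynomial.X ^ k
    with hPdef
  have hPeval : ∀ w : ℂ, P.eval w = q.partialSum m w := by
    intro w
    rw [partialSum_eq, hPdef, Polynomial.eval_finset_sum]
    refine Finset.sum_congr rfl fun k _ => ?_
    rw [Polynomial.eval_mul, Polynomial.eval_C, Polynomial.eval_pow, Polynomial.eval_X,
      mul_comm]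
  obtain ⟨Q, hQrat, hQ⟩ := exists_ratPoly_approx P M (ε / 3) (by linarith)
  refine ⟨Q, hQrat, fun z hz => ?_⟩
  have hzball : z ∈ ball z₀ r := hK hz
  have hLzM : ‖L z‖ ≤ M := hLM z hz
  have b1 : ‖Q.eval (L z) - P.eval (L z)‖ ≤ ε / 3 := hQ (L z) hLzM
  have b2 : ‖P.eval (L z) - h (L z)‖ ≤ ε / 3 := by
    have hmem : L z ∈ ball (0 : ℂ) (((M + 2⁻¹).toNNReal : ℝ)) := by
      rw [mem_ball_zero_iff, Real.coe_toNNReal _ (by linarith)]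
      calc ‖L z‖ ≤ M := hLzM
        _ < M + 2⁻¹ := by norm_num
    have h2 := hm (L z) hmem
    rw [dist_eq_norm, sub_zero] at h2
    rw [hPeval, norm_sub_rev]
    linarith
  have b3 : ‖h (L z) - f z‖ ≤ ε / 3 := by
    have hzb2 : z ∈ ball z₀ ((r₂.toNNReal : ℝ)) := by
      rw [Real.coe_toNNReal _ h0r₂.le]
      exact (closedBall_subset_ball hρr₂) hz
    have h3 := hn z hzb2
    rw [dist_eq_norm] at h3
    have hhz : h (L z) = p.partialSum n (z - z₀) := by
      rw [partialSum_eq, hhdef]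
      simp only
      rw [hexp z hzball]
    rw [hhz, norm_sub_rev]
    linarith
  have e : Q.eval (L z) - f z = (Q.eval (L z) - P.eval (L z))
      + (P.eval (L z) - h (L z)) + (h (L z) - f z) := by ring
  rw [e]
  calc ‖(Q.eval (L z) - P.eval (L z)) + (P.eval (L z) - h (L z)) + (h (L z) - f z)‖
      ≤ ‖Q.eval (L z) - P.eval (L z)‖ + ‖P.eval (L z) - h (L z)‖ + ‖h (L z) - f z‖ :=
        norm_add₃_le
    _ ≤ ε / 3 + ε / 3 + ε / 3 := by linarith
    _ = ε := by ring

theorem ratPolyLog_dense (z₀ : ℂ) (r : ℝ) (hr : 0 < r) (h0 : (0 : ℂ) ∉ ball z₀ r)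
    (L : ℂ → ℂ) (hL : DifferentiableOn ℂ L (ball z₀ r))
    (hexp : ∀ z ∈ ball z₀ r, Complex.exp (L z) = z) :
    Dense {f : Hol z₀ r | ∃ P : Polynomial ℂ, RatCoeff P ∧
      ∀ z ∈ ball z₀ r, UniformOnFun.toFun (Compacts z₀ r) f.1 z = P.eval (L z)} := by
  have key : ∀ f : Hol z₀ r, f ∈ closure {f : Hol z₀ r | ∃ P : Polynomial ℂ, RatCoeff P ∧
      ∀ z ∈ ball z₀ r, UniformOnFun.toFun (Compacts z₀ r) f.1 z = P.eval (L z)} := by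
    intro f
    set ρ : ℕ → ℝ := fun n => r - r / ((n : ℝ) + 2) with hρdef
    have hρ0 : ∀ n, 0 ≤ ρ n := by
      intro n
      have hn0 : (0 : ℝ) ≤ (n : ℝ) := Nat.cast_nonneg n
      have h2 : (1 : ℝ) ≤ (n : ℝ) + 2 := by linarith
      have := div_le_self hr.le h2
      simp only [hρdef]
      linarith
    have hρlt : ∀ n, ρ n < r := by
      intro n
      have : 0 < r / ((n : ℝ) + 2) := div_pos hr (by positivity)
      simp only [hρdef]
      linarith
    choose Q hQrat hQ using fun n : ℕ =>
      main_approx z₀ r hr L hexp hL.continuousOn _ f.2 (ρ n) (hρ0 n) (hρlt n)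
        (1 / ((n : ℝ) + 1)) (by positivity)
    set g : ℕ → Hol z₀ r := fun n =>
      ⟨UniformOnFun.ofFun (Compacts z₀ r) fun z => (Q n).eval (L z), by
        rw [UniformOnFun.toFun_ofFun]
        exact (Q n).differentiable.comp_differentiableOn hL⟩ with hgdef
    have hmem : ∀ n, g n ∈ {f : Hol z₀ r | ∃ P : Polynomial ℂ, RatCoeff P ∧
        ∀ z ∈ ball z₀ r, UniformOnFun.toFun (Compacts z₀ r) f.1 z = P.eval (L z)} :=
      fun n => ⟨Q n, hQrat n, fun z _ => rfl⟩
    have htends : Tendsto g atTop (𝓝 f) := by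
      refine tendsto_subtype_rng.mpr ?_
      rw [UniformOnFun.tendsto_iff_tendstoUniformlyOn]
      intro K hKmem
      obtain ⟨hKc, hKb⟩ := hKmem
      rw [Metric.tendstoUniformlyOn_iff]
      intro ε hε
      obtain ⟨d, hd0, hdr, hKd⟩ : ∃ d, 0 ≤ d ∧ d < r ∧ K ⊆ closedBall z₀ d := by
        rcases K.eq_empty_or_nonempty with hKe | hKne
        · exact ⟨0, le_refl 0, hr, by simp [hKe]⟩
        · obtain ⟨x, hxK, hx⟩ := hKc.exists_isMaxOn hKne
            ((continuous_id.dist continuous_const).continuousOn :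
              ContinuousOn (fun y => dist y z₀) K)
          exact ⟨dist x z₀, dist_nonneg, mem_ball.mp (hKb hxK),
            fun y hy => mem_closedBall.mpr (hx hy)⟩
      have h1 : Tendsto (fun n : ℕ => r / ((n : ℝ) + 2)) atTop (𝓝 0) :=
        Tendsto.div_atTop tendsto_const_nhds
          (tendsto_atTop_add_const_right _ 2 tendsto_natCast_atTop_atTop)
      have h2 : ∀ᶠ n : ℕ in atTop, r / ((n : ℝ) + 2) < r - d :=
        h1.eventually_lt_const (by linarith)
      have h4 : ∀ᶠ n : ℕ in atTop, 1 / ((n : ℝ) + 1) < ε :=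
        tendsto_one_div_add_atTop_nhds_zero_nat.eventually_lt_const hε
      filter_upwards [h2, h4] with n hn2 hn4
      intro z hz
      have hzd : z ∈ closedBall z₀ (ρ n) := by
        have hzK : dist z z₀ ≤ d := mem_closedBall.mp (hKd hz)
        have hdρ : d ≤ ρ n := by simp only [hρdef]; linarith
        exact mem_closedBall.mpr (hzK.trans hdρ)
      have hb := hQ n z hzd
      have final : dist (UniformOnFun.toFun (Compacts z₀ r) f.1 z) ((Q n).eval (L z)) < ε := by
        rw [dist_eq_norm, norm_sub_rev]
        exact lt_of_le_of_lt hb hn4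
      exact final
    exact mem_closure_of_tendsto htends (Eventually.of_forall hmem)
  exact key
end
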